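/- Let 0 < a_1 ≤ a_2, K = [a_1,a_2], φ(t) = (t, t², t³), L = φ(K) ⊆ ℝ³, and Λ = convexHull(L). Let c, q ∈ ℝ³ satisfy: (i) there exists ε ∈ {+1,−1} such that for all t, s ∈ K with s ≠ t, ε · (φ′(t) × (c × q)) · (φ(s) − φ(t)) > 0, where φ′(t) = (1, 2t, 3t²); (ii) if there is exactly one a ∈ K with (φ(a_1) + φ(a_2) − 2φ(a)) · q = 0, then that a satisfies (φ(a_1) + φ(a_2) − 2φ(a)) · c > 0. Then for every ξ ∈ ℝ such that the set S_ξ = {m ∈ Λ : q·m = ξ} is nonempty, every point of S_ξ at which m ↦ c·m attains its minimum over S_ξ belongs to L. -/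

import Mathlib

open Matrix Filter Topology

lemma support_lemma {E : Type} [AddCommGroup E] [Module ℝ E] (S : Set E)
    (L : E →ₗ[ℝ] ℝ) (p0 : E)
    (hS : ∀ p ∈ S, p = p0 ∨ L p0 < L p) :
    ∀ m ∈ convexHull ℝ S, m ≠ p0 → L p0 < L m := by
  intro m hm hne
  rw [convexHull_eq] at hm
  obtain ⟨ι, t, w, z, hw0, hw1, hz, hcm⟩ := hm
  rw [Finset.centerMass_eq_of_sum_1 _ _ hw1] at hcm
  by_cases hall : ∀ i ∈ t, w i ≠ 0 → z i = p0
  · exfalso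
    apply hne
    rw [← hcm]
    have h1 : ∀ i ∈ t, w i • z i = w i • p0 := by
      intro i hi
      by_cases h : w i = 0
      · simp [h]
      · rw [hall i hi h]
    rw [Finset.sum_congr rfl h1, ← Finset.sum_smul, hw1, one_smul]
  · push_neg at hall
    obtain ⟨i0, hi0t, hwi0, hzi0⟩ := hall
    have hL : L m = ∑ i ∈ t, w i * L (z i) := by
      rw [← hcm, map_sum]
      simp [smul_eq_mul]
    have hconst : L p0 = ∑ i ∈ t, w i * L p0 := by
      rw [← Finset.sum_mul, hw1, one_mul]
    rw [hL, hconst]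
    apply Finset.sum_lt_sum
    · intro i hi
      rcases hS (z i) (hz i hi) with h | h
      · rw [h]
      · exact mul_le_mul_of_nonneg_left h.le (hw0 i hi)
    · refine ⟨i0, hi0t, ?_⟩
      have hw : 0 < w i0 := lt_of_le_of_ne (hw0 i0 hi0t) (Ne.symm hwi0)
      rcases hS (z i0) (hz i0 hi0t) with h | h
      · exact absurd h hzi0
      · exact mul_lt_mul_of_pos_left h hw

lemma crossing_lemma {X X' : ℝ → ℝ} (hd : ∀ t, HasDerivAt X (X' t) t)
    {a1 a2 ξ ε : ℝ}
    (hder : ∀ b ∈ Set.Icc a1 a2, X b = ξ → ε * X' b < 0) :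
    ∀ b1 ∈ Set.Icc a1 a2, ∀ b2 ∈ Set.Icc a1 a2, X b1 = ξ → X b2 = ξ → b1 = b2 := by
  have hXcont : Continuous X := by
    rw [continuous_iff_continuousAt]; exact fun t => (hd t).continuousAt
  have main : ∀ b1 ∈ Set.Icc a1 a2, ∀ b2 ∈ Set.Icc a1 a2, X b1 = ξ → X b2 = ξ →
      b1 < b2 → False := by
    intro b1 hb1 b2 hb2 hX1 hX2 h12
    have hεne : ε ≠ 0 := by
      intro h
      have := hder b1 hb1 hX1
      rw [h] at this; simp at this
    set Z : ℝ → ℝ := fun t => ε * (X t - ξ) with hZdef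
    have hdZ : ∀ t, HasDerivAt Z (ε * X' t) t := by
      intro t
      simpa using (((hd t).sub_const ξ).const_mul ε)
    have hZcont : Continuous Z := continuous_const.mul (hXcont.sub continuous_const)
    have hZ1 : Z b1 = 0 := by simp [hZdef, hX1]
    have hZ2 : Z b2 = 0 := by simp [hZdef, hX2]
    have hs1 : Tendsto (slope Z b1) (𝓝[>] b1) (𝓝 (ε * X' b1)) :=
      ((hasDerivAt_iff_tendsto_slope).1 (hdZ b1)).mono_left
        (nhdsWithin_mono b1 (fun x hx => ne_of_gt hx))
    have hneg1 : ε * X' b1 < 0 := hder b1 hb1 hX1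
    have hev1 : ∀ᶠ t in 𝓝[>] b1, slope Z b1 t < 0 ∧ t ∈ Set.Ioo b1 b2 := by
      filter_upwards [hs1.eventually_lt_const hneg1,
        Ioo_mem_nhdsGT_of_mem ⟨le_refl b1, h12⟩] with t h1 h2
      exact ⟨h1, h2⟩
    obtain ⟨t0, hsl0, ht0⟩ := hev1.exists
    have hZt0 : Z t0 < 0 := by
      rw [slope_def_field, hZ1, sub_zero, div_neg_iff] at hsl0
      rcases hsl0 with ⟨_, h⟩ | ⟨h, _⟩
      · linarith [ht0.1]
      · exact h
    have hs2 : Tendsto (slope Z b2) (𝓝[<] b2) (𝓝 (ε * X' b2)) :=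
      ((hasDerivAt_iff_tendsto_slope).1 (hdZ b2)).mono_left
        (nhdsWithin_mono b2 (fun x hx => ne_of_lt hx))
    have hneg2 : ε * X' b2 < 0 := hder b2 hb2 hX2
    have hev2 : ∀ᶠ t in 𝓝[<] b2, slope Z b2 t < 0 ∧ t ∈ Set.Ioo t0 b2 := by
      filter_upwards [hs2.eventually_lt_const hneg2,
        Ioo_mem_nhdsLT_of_mem ⟨ht0.2, le_refl b2⟩] with t h1 h2
      exact ⟨h1, h2⟩
    obtain ⟨t1, hsl1, ht1⟩ := hev2.exists
    have hZt1 : 0 < Z t1 := by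
      rw [slope_def_field, hZ2, sub_zero, div_neg_iff] at hsl1
      rcases hsl1 with ⟨h, _⟩ | ⟨_, h⟩
      · linarith
      · linarith [ht1.2]
    have ht01 : t0 < t1 := ht1.1
    set W : Set ℝ := Set.Icc t0 t1 ∩ Z ⁻¹' {0} with hWdef
    have hWne : W.Nonempty := by
      have h0 : (0:ℝ) ∈ Set.Icc (Z t0) (Z t1) := ⟨hZt0.le, hZt1.le⟩
      obtain ⟨cc, hc1, hc2⟩ := intermediate_value_Icc ht01.le (hZcont.continuousOn) h0
      exact ⟨cc, hc1, hc2⟩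
    have hWbdd : BddAbove W := BddAbove.mono Set.inter_subset_left (bddAbove_Icc)
    have hWclosed : IsClosed W :=
      IsClosed.inter isClosed_Icc (isClosed_singleton.preimage hZcont)
    set b3 := sSup W with hb3def
    have hb3W : b3 ∈ W := hWclosed.csSup_mem hWne hWbdd
    have hb3ub : ∀ t ∈ W, t ≤ b3 := fun t ht => le_csSup hWbdd ht
    have hZb3 : Z b3 = 0 := hb3W.2
    have hb3lt : b3 < t1 := lt_of_le_of_ne hb3W.1.2 (by intro h; rw [h] at hZb3; linarith)
    have hpos : ∀ t, b3 < t → t ≤ t1 → 0 < Z t := by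
      intro t ht3 ht1'
      rcases lt_trichotomy (Z t) 0 with h | h | h
      · exfalso
        have h0 : (0:ℝ) ∈ Set.Icc (Z t) (Z t1) := ⟨h.le, hZt1.le⟩
        obtain ⟨cc, hc1, hc2⟩ := intermediate_value_Icc ht1' (hZcont.continuousOn) h0
        have hcW : cc ∈ W := ⟨⟨le_trans hb3W.1.1 (le_trans ht3.le hc1.1), hc1.2⟩, hc2⟩
        have := hb3ub cc hcW
        linarith [hc1.1]
      · exfalso
        have htW : t ∈ W := ⟨⟨le_trans hb3W.1.1 ht3.le, ht1'⟩, h⟩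
        linarith [hb3ub t htW]
      · exact h
    have hs3 : Tendsto (slope Z b3) (𝓝[>] b3) (𝓝 (ε * X' b3)) :=
      ((hasDerivAt_iff_tendsto_slope).1 (hdZ b3)).mono_left
        (nhdsWithin_mono b3 (fun x hx => ne_of_gt hx))
    have hge : 0 ≤ ε * X' b3 := by
      apply ge_of_tendsto hs3
      filter_upwards [Ioc_mem_nhdsGT_of_mem ⟨le_refl b3, hb3lt⟩] with t ht
      rw [slope_def_field, hZb3, sub_zero]
      exact le_of_lt (div_pos (hpos t ht.1 ht.2) (by linarith [ht.1]))
    have hb3K : b3 ∈ Set.Icc a1 a2 :=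
      ⟨le_trans hb1.1 (le_trans ht0.1.le hb3W.1.1),
       le_trans (le_trans hb3W.1.2 ht1.2.le) hb2.2⟩
    have hXb3 : X b3 = ξ := by
      have hz3 : ε * (X b3 - ξ) = 0 := hZb3
      rcases mul_eq_zero.1 hz3 with h | h
      · exact absurd h hεne
      · linarith
    linarith [hder b3 hb3K hXb3]
  intro b1 hb1 b2 hb2 h1 h2
  rcases lt_trichotomy b1 b2 with h | h | h
  · exact (main b1 hb1 b2 hb2 h1 h2 h).elim
  · exact h
  · exact (main b2 hb2 b1 hb1 h2 h1 h).elim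

set_option maxHeartbeats 2000000 in
theorem stmt_14
    (a1 a2 : ℝ) (ha1 : 0 < a1) (ha : a1 ≤ a2)
    (φ φ' : ℝ → Fin 3 → ℝ)
    (hφ : φ = fun t => ![t, t ^ 2, t ^ 3])
    (hφ' : φ' = fun t => ![1, 2 * t, 3 * t ^ 2])
    (c q : Fin 3 → ℝ)
    (hsign : ∃ ε : ℝ, (ε = 1 ∨ ε = -1) ∧
      ∀ t ∈ Set.Icc a1 a2, ∀ s ∈ Set.Icc a1 a2, s ≠ t →
        0 < ε * ((φ' t ⨯₃ (c ⨯₃ q)) ⬝ᵥ (φ s - φ t)))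
    (huniq : ∀ a ∈ Set.Icc a1 a2,
      ((φ a1 + φ a2 - 2 • φ a) ⬝ᵥ q = 0 ∧
        ∀ b ∈ Set.Icc a1 a2, (φ a1 + φ a2 - 2 • φ b) ⬝ᵥ q = 0 → b = a) →
      0 < (φ a1 + φ a2 - 2 • φ a) ⬝ᵥ c) :
    ∀ ξ : ℝ,
      ({mm ∈ convexHull ℝ (φ '' Set.Icc a1 a2) | q ⬝ᵥ mm = ξ}).Nonempty →
      ∀ m0 ∈ {mm ∈ convexHull ℝ (φ '' Set.Icc a1 a2) | q ⬝ᵥ mm = ξ},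
        (∀ m' ∈ {mm ∈ convexHull ℝ (φ '' Set.Icc a1 a2) | q ⬝ᵥ mm = ξ},
          c ⬝ᵥ m0 ≤ c ⬝ᵥ m') →
        m0 ∈ φ '' Set.Icc a1 a2 := by
  intro ξ hne m0 hm0 hmin
  obtain ⟨hm0Λ, hm0ξ⟩ := hm0
  rcases ha.eq_or_lt with hEq | ha12
  · -- degenerate case a1 = a2
    subst hEq
    rw [Set.Icc_self] at hm0Λ ⊢
    rw [Set.image_singleton, convexHull_singleton] at hm0Λ
    rw [Set.image_singleton]
    exact hm0Λ
  obtain ⟨ε, hε, hsgn⟩ := hsign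
  set K := Set.Icc a1 a2 with hK
  set X : ℝ → ℝ := fun t => q ⬝ᵥ φ t with hXdef
  set Y : ℝ → ℝ := fun t => c ⬝ᵥ φ t with hYdef
  set DX : ℝ → ℝ := fun t => φ' t ⬝ᵥ q with hDXdef
  set DY : ℝ → ℝ := fun t => φ' t ⬝ᵥ c with hDYdef
  have hφK_sub : φ '' K ⊆ convexHull ℝ (φ '' K) := subset_convexHull ℝ _
  -- reformulated sign hypothesis
  have hsgn' : ∀ t ∈ K, ∀ s ∈ K, s ≠ t →
      0 < ε * (DX t * (Y s - Y t) - DY t * (X s - X t)) := by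
    intro t ht s hs hst
    have h := hsgn t ht s hs hst
    have hkey : (φ' t ⨯₃ (c ⨯₃ q)) ⬝ᵥ (φ s - φ t)
        = DX t * (Y s - Y t) - DY t * (X s - X t) := by
      simp only [hDXdef, hDYdef, hXdef, hYdef, hφ, hφ']
      simp [crossProduct, dotProduct, Fin.sum_univ_three]
      ring
    rw [hkey] at h
    exact h
  -- polynomial forms and derivatives
  have hXpoly : ∀ t, X t = q 0 * t ^ 1 + (q 1 * t ^ 2 + q 2 * t ^ 3) := by
    intro t; simp [hXdef, hφ, dotProduct, Fin.sum_univ_three]; ring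
  have hYpoly : ∀ t, Y t = c 0 * t ^ 1 + (c 1 * t ^ 2 + c 2 * t ^ 3) := by
    intro t; simp [hYdef, hφ, dotProduct, Fin.sum_univ_three]; ring
  have hdX : ∀ t, HasDerivAt X (DX t) t := by
    intro t
    have hfun : X = fun u => q 0 * u ^ 1 + (q 1 * u ^ 2 + q 2 * u ^ 3) := funext hXpoly
    rw [hfun]
    have h := ((hasDerivAt_pow 1 t).const_mul (q 0)).add
      (((hasDerivAt_pow 2 t).const_mul (q 1)).add ((hasDerivAt_pow 3 t).const_mul (q 2)))
    refine h.congr_deriv ?_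
    simp [hDXdef, hφ', dotProduct, Fin.sum_univ_three]
    push_cast; ring
  have hdY : ∀ t, HasDerivAt Y (DY t) t := by
    intro t
    have hfun : Y = fun u => c 0 * u ^ 1 + (c 1 * u ^ 2 + c 2 * u ^ 3) := funext hYpoly
    rw [hfun]
    have h := ((hasDerivAt_pow 1 t).const_mul (c 0)).add
      (((hasDerivAt_pow 2 t).const_mul (c 1)).add ((hasDerivAt_pow 3 t).const_mul (c 2)))
    refine h.congr_deriv ?_
    simp [hDYdef, hφ', dotProduct, Fin.sum_univ_three]
    push_cast; ring
  -- dot product of a sum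
  have hdot_sum : ∀ (r : Fin 3 → ℝ) (ι : Type) (fs : Finset ι) (w : ι → ℝ) (z : ι → Fin 3 → ℝ),
      r ⬝ᵥ (∑ i ∈ fs, w i • z i) = ∑ i ∈ fs, w i * (r ⬝ᵥ z i) := by
    intro r ι fs w z
    simp only [dotProduct, Finset.sum_apply, Pi.smul_apply, smul_eq_mul, Finset.mul_sum]
    rw [Finset.sum_comm]
    apply Finset.sum_congr rfl; intro i _
    apply Finset.sum_congr rfl; intro j _
    ring
  -- the support lemma, specialized
  have lem1 : ∀ t ∈ K, ∀ m ∈ convexHull ℝ (φ '' K), m ≠ φ t →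
      0 < ε * (DX t * (c ⬝ᵥ m - Y t) - DY t * (q ⬝ᵥ m - X t)) := by
    intro t ht m hm hmne
    have hLex : ∃ L : (Fin 3 → ℝ) →ₗ[ℝ] ℝ,
        ∀ m', L m' = ε * (DX t * (c ⬝ᵥ m') - DY t * (q ⬝ᵥ m')) := by
      refine ⟨{ toFun := fun m' => ε * (DX t * (c ⬝ᵥ m') - DY t * (q ⬝ᵥ m')),
                map_add' := ?_, map_smul' := ?_ }, fun m' => rfl⟩
      · intro x y; simp [dotProduct_add]; ring
      · intro r x; simp [dotProduct_smul, smul_eq_mul]; ring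
    obtain ⟨L, hL⟩ := hLex
    have h := support_lemma (φ '' K) L (φ t) ?_ m hm hmne
    · rw [hL, hL] at h
      have hYt : c ⬝ᵥ φ t = Y t := rfl
      have hXt : q ⬝ᵥ φ t = X t := rfl
      rw [hYt, hXt] at h
      nlinarith [h]
    · rintro p ⟨s, hs, rfl⟩
      by_cases hst : s = t
      · left; rw [hst]
      · right
        rw [hL, hL]
        have hs' := hsgn' t ht s hs hst
        have hYs : c ⬝ᵥ φ s = Y s := rfl
        have hXs : q ⬝ᵥ φ s = X s := rfl
        have hYt : c ⬝ᵥ φ t = Y t := rfl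
        have hXt : q ⬝ᵥ φ t = X t := rfl
        rw [hYs, hXs, hYt, hXt]
        nlinarith [hs']
  -- dot product expansion for huniq terms
  have hexp2 : ∀ (b : ℝ) (r : Fin 3 → ℝ),
      (φ a1 + φ a2 - 2 • φ b) ⬝ᵥ r = (r ⬝ᵥ φ a1) + (r ⬝ᵥ φ a2) - 2 * (r ⬝ᵥ φ b) := by
    intro b r
    simp [dotProduct, Fin.sum_univ_three, Pi.add_apply, Pi.sub_apply, Pi.smul_apply]
    ring
  set η := c ⬝ᵥ m0 with hηdef
  have hmin' : ∀ m ∈ convexHull ℝ (φ '' K), q ⬝ᵥ m = ξ → η ≤ c ⬝ᵥ m :=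
    fun m h1 h2 => hmin m ⟨h1, h2⟩
  -- KEY CLAIM
  have key : ∃ a ∈ K, X a = ξ ∧ Y a = η := by
    by_contra hno
    push_neg at hno
    have hTge : ∀ t ∈ K, X t = ξ → η < Y t := by
      intro t ht hXt
      have h1 : η ≤ Y t := hmin' (φ t) (hφK_sub (Set.mem_image_of_mem _ ht)) hXt
      exact lt_of_le_of_ne h1 (Ne.symm (hno t ht hXt))
    -- Caratheodory-type representation
    have hm0Λ' := hm0Λ
    rw [convexHull_eq] at hm0Λ'
    obtain ⟨ι, fs, w, z, hw0, hw1, hzmem, hcm⟩ := hm0Λ'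
    rw [Finset.centerMass_eq_of_sum_1 _ _ hw1] at hcm
    have hzmem' : ∀ i, i ∈ fs → ∃ s, s ∈ K ∧ φ s = z i := by
      intro i hi; rcases hzmem i hi with ⟨s, hs, hφs⟩; exact ⟨s, hs, hφs⟩
    choose! τ hτK hτz using hzmem'
    have hsumq : ∑ i ∈ fs, w i * X (τ i) = ξ := by
      have h1 : q ⬝ᵥ m0 = ∑ i ∈ fs, w i * (q ⬝ᵥ z i) := by
        rw [← hcm]; exact hdot_sum q ι fs w z
      rw [← hm0ξ, h1]
      apply Finset.sum_congr rfl; intro i hi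
      rw [← hτz i hi]
    have hsumc : ∑ i ∈ fs, w i * Y (τ i) = η := by
      have h1 : c ⬝ᵥ m0 = ∑ i ∈ fs, w i * (c ⬝ᵥ z i) := by
        rw [← hcm]; exact hdot_sum c ι fs w z
      rw [hηdef, h1]
      apply Finset.sum_congr rfl; intro i hi
      rw [← hτz i hi]
    have hex : ∃ i ∈ fs, 0 < w i := by
      by_contra h'; push_neg at h'
      have h0 : ∑ i ∈ fs, w i = 0 :=
        Finset.sum_eq_zero (fun i hi => le_antisymm (h' i hi) (hw0 i hi))
      rw [hw1] at h0; norm_num at h0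
    -- mass on both sides of ξ
    have hside : ∀ (sgn : ℝ), sgn = 1 ∨ sgn = -1 →
        (∀ i ∈ fs, 0 < w i → sgn * (X (τ i) - ξ) ≤ 0) → False := by
      intro sgn _ h
      have hz2 : ∑ i ∈ fs, w i * (sgn * (X (τ i) - ξ)) = 0 := by
        have hcalc : ∀ i, w i * (sgn * (X (τ i) - ξ)) = sgn * (w i * X (τ i)) - (sgn * ξ) * w i :=
          fun i => by ring
        rw [Finset.sum_congr rfl (fun i _ => hcalc i), Finset.sum_sub_distrib,
          ← Finset.mul_sum, ← Finset.mul_sum, hsumq, hw1]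
        ring
      have hterm : ∀ i ∈ fs, 0 ≤ w i * -(sgn * (X (τ i) - ξ)) := by
        intro i hi
        rcases (hw0 i hi).eq_or_lt with h0 | h0
        · rw [← h0]; simp
        · exact mul_nonneg h0.le (by linarith [h i hi h0])
      have hz3 : ∑ i ∈ fs, w i * -(sgn * (X (τ i) - ξ)) = 0 := by
        rw [← neg_eq_zero, ← Finset.sum_neg_distrib]
        rw [← hz2]
        apply Finset.sum_congr rfl; intro i _; ring
      have hall := (Finset.sum_eq_zero_iff_of_nonneg hterm).1 hz3
      -- every support point is on the slice; contradiction via Y values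
      have hXeq : ∀ i ∈ fs, 0 < w i → X (τ i) = ξ := by
        intro i hi hwi
        have := hall i hi
        have hsgnne : sgn ≠ 0 := by rcases ‹sgn = 1 ∨ sgn = -1› with h|h <;> rw [h] <;> norm_num
        have h2 : -(sgn * (X (τ i) - ξ)) = 0 := by
          rcases mul_eq_zero.1 this with h | h
          · exact absurd h (ne_of_gt hwi)
          · exact h
        have h3 : sgn * (X (τ i) - ξ) = 0 := by linarith
        rcases mul_eq_zero.1 h3 with h | h
        · exact absurd h hsgnne
        · linarith
      have hsum_pos : 0 < ∑ i ∈ fs, w i * (Y (τ i) - η) := by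
        obtain ⟨i0, hi0, hwi0⟩ := hex
        apply Finset.sum_pos'
        · intro i hi
          rcases (hw0 i hi).eq_or_lt with h0 | h0
          · rw [← h0]; simp
          · exact mul_nonneg h0.le
              (by linarith [hTge (τ i) (hτK i hi) (hXeq i hi h0)])
        · exact ⟨i0, hi0, mul_pos hwi0
            (by linarith [hTge (τ i0) (hτK i0 hi0) (hXeq i0 hi0 hwi0)])⟩
      have hsum_zero : ∑ i ∈ fs, w i * (Y (τ i) - η) = 0 := by
        have hcalc : ∀ i, w i * (Y (τ i) - η) = w i * Y (τ i) - η * w i := fun i => by ring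
        rw [Finset.sum_congr rfl (fun i _ => hcalc i), Finset.sum_sub_distrib,
          ← Finset.mul_sum, hsumc, hw1]
        ring
      linarith
    have hexgt : ∃ j ∈ fs, 0 < w j ∧ ξ < X (τ j) := by
      by_contra h; push_neg at h
      exact hside 1 (Or.inl rfl) (fun i hi hwi => by
        have := h i hi hwi; linarith)
    have hexlt : ∃ i ∈ fs, 0 < w i ∧ X (τ i) < ξ := by
      by_contra h; push_neg at h
      exact hside (-1) (Or.inr rfl) (fun i hi hwi => by
        have := h i hi hwi; linarith)
    obtain ⟨iR, hiR, hwiR, hXiR⟩ := hexgt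
    obtain ⟨iL, hiL, hwiL, hXiL⟩ := hexlt
    -- chord inequality from minimality
    have hchord : ∀ s ∈ K, ξ < X s → ∀ u ∈ K, X u < ξ →
        (η - Y u) * (X s - ξ) ≤ (η - Y s) * (X u - ξ) := by
      intro s hs hXs u hu hXu
      set lam := (X s - ξ)/(X s - X u) with hlamdef
      have hden : 0 < X s - X u := by linarith
      have hlam0 : 0 < lam := div_pos (by linarith) hden
      have hlam1 : lam < 1 := (div_lt_one hden).2 (by linarith)
      have h1 : lam * (X s - X u) = X s - ξ := by
        rw [hlamdef]; field_simp
      have hmem : lam • φ u + (1 - lam) • φ s ∈ convexHull ℝ (φ '' K) :=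
        (convex_convexHull ℝ _) (hφK_sub ⟨u, hu, rfl⟩) (hφK_sub ⟨s, hs, rfl⟩)
          hlam0.le (by linarith) (by ring)
      have hqval : q ⬝ᵥ (lam • φ u + (1 - lam) • φ s) = ξ := by
        rw [dotProduct_add, dotProduct_smul, dotProduct_smul]
        have hXu' : q ⬝ᵥ φ u = X u := rfl
        have hXs' : q ⬝ᵥ φ s = X s := rfl
        rw [hXu', hXs', smul_eq_mul, smul_eq_mul]
        nlinarith [h1]
      have hmin2 : η ≤ lam * Y u + (1 - lam) * Y s := by
        have h2 := hmin' _ hmem hqval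
        have hYu' : c ⬝ᵥ φ u = Y u := rfl
        have hYs' : c ⬝ᵥ φ s = Y s := rfl
        rw [dotProduct_add, dotProduct_smul, dotProduct_smul,
          hYu', hYs', smul_eq_mul, smul_eq_mul] at h2
        exact h2
      have h2 := mul_le_mul_of_nonneg_right hmin2 hden.le
      have h3 : lam * (X s - X u) * Y u = (X s - ξ) * Y u := by rw [h1]
      have h4 : lam * (X s - X u) * Y s = (X s - ξ) * Y s := by rw [h1]
      nlinarith [h2, h3, h4]
    -- supremum construction for supporting line
    set A : Set ℝ := (fun t => (η - Y t)/(X t - ξ)) '' {t | t ∈ K ∧ ξ < X t} with hAdef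
    have hAne : A.Nonempty := ⟨_, ⟨τ iR, ⟨hτK iR hiR, hXiR⟩, rfl⟩⟩
    have hub : ∀ u ∈ K, X u < ξ → (η - Y u)/(X u - ξ) ∈ upperBounds A := by
      rintro u hu hXu p ⟨s, ⟨hsK, hXs⟩, rfl⟩
      have hcl := hchord s hsK hXs u hu hXu
      rw [div_le_iff₀ (by linarith : (0:ℝ) < X s - ξ), div_mul_eq_mul_div,
        le_div_iff_of_neg (by linarith : X u - ξ < 0)]
      linarith [hcl]
    have hbdd : BddAbove A := ⟨_, hub (τ iL) (hτK iL hiL) hXiL⟩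
    set α := sSup A with hαdef
    have hsupp : ∀ t ∈ K, η - Y t ≤ α * (X t - ξ) := by
      intro t ht
      rcases lt_trichotomy (X t) ξ with h | h | h
      · have h1 : α ≤ (η - Y t)/(X t - ξ) := csSup_le hAne (hub t ht h)
        rw [le_div_iff_of_neg (by linarith : X t - ξ < 0)] at h1
        linarith [h1]
      · rw [h]; simp
        linarith [hTge t ht h]
      · have h1 : (η - Y t)/(X t - ξ) ≤ α := le_csSup hbdd ⟨t, ⟨ht, h⟩, rfl⟩
        rw [div_le_iff₀ (by linarith : (0:ℝ) < X t - ξ)] at h1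
        linarith [h1]
    -- contact points
    have hFsum : ∑ i ∈ fs, w i * ((Y (τ i) + α * (X (τ i) - ξ)) - η) = 0 := by
      have hcalc : ∀ i, w i * ((Y (τ i) + α * (X (τ i) - ξ)) - η)
          = w i * Y (τ i) + α * (w i * X (τ i)) - (α * ξ + η) * w i := fun i => by ring
      rw [Finset.sum_congr rfl (fun i _ => hcalc i), Finset.sum_sub_distrib,
        Finset.sum_add_distrib, ← Finset.mul_sum, ← Finset.mul_sum,
        hsumq, hsumc, hw1]
      ring
    have hcontact : ∀ i ∈ fs, 0 < w i → Y (τ i) + α * (X (τ i) - ξ) = η := by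
      intro i hi hwi
      have hterm : ∀ j ∈ fs, 0 ≤ w j * ((Y (τ j) + α * (X (τ j) - ξ)) - η) := by
        intro j hj
        exact mul_nonneg (hw0 j hj) (by linarith [hsupp (τ j) (hτK j hj)])
      have h := (Finset.sum_eq_zero_iff_of_nonneg hterm).1 hFsum i hi
      rcases mul_eq_zero.1 h with h' | h'
      · exact absurd h' (ne_of_gt hwi)
      · linarith
    -- two distinct contact points
    have hdist : ∃ i ∈ fs, ∃ j ∈ fs, 0 < w i ∧ 0 < w j ∧ τ i ≠ τ j := by
      by_contra h; push_neg at h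
      obtain ⟨i0, hi0, hwi0⟩ := hex
      have hall : ∀ i ∈ fs, w i ≠ 0 → z i = φ (τ i0) := by
        intro i hi hwi
        have hwi' : 0 < w i := lt_of_le_of_ne (hw0 i hi) (Ne.symm hwi)
        have heq := h i hi i0 hi0 hwi' hwi0
        rw [← hτz i hi, heq]
      have hm0eq : m0 = φ (τ i0) := by
        rw [← hcm]
        have h1 : ∀ i ∈ fs, w i • z i = w i • φ (τ i0) := by
          intro i hi
          by_cases h' : w i = 0
          · simp [h']
          · rw [hall i hi h']
        rw [Finset.sum_congr rfl h1, ← Finset.sum_smul, hw1, one_smul]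
      have hXb : X (τ i0) = ξ := by rw [hXdef]; simp only []; rw [← hm0eq]; exact hm0ξ
      have hYb : Y (τ i0) = η := by rw [hYdef, hηdef]; simp only []; rw [← hm0eq]
      exact hno (τ i0) (hτK i0 hi0) hXb hYb
    obtain ⟨i1, hi1, j1, hj1, hwi1, hwj1, hij⟩ := hdist
    have hpair : ∃ b1 b2, b1 ∈ K ∧ b2 ∈ K ∧ b1 < b2 ∧
        (Y b1 + α * (X b1 - ξ) = η) ∧ (Y b2 + α * (X b2 - ξ) = η) := by
      rcases lt_or_gt_of_ne hij with h | h
      · exact ⟨τ i1, τ j1, hτK _ hi1, hτK _ hj1, h,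
          hcontact _ hi1 hwi1, hcontact _ hj1 hwj1⟩
      · exact ⟨τ j1, τ i1, hτK _ hj1, hτK _ hi1, h,
          hcontact _ hj1 hwj1, hcontact _ hi1 hwi1⟩
    obtain ⟨b1, b2, hb1K, hb2K, hb12, hFb1, hFb2⟩ := hpair
    have hFmin : ∀ s ∈ K, η ≤ Y s + α * (X s - ξ) := fun s hs => by
      linarith [hsupp s hs]
    have hdF : ∀ t, HasDerivAt (fun u => Y u + α * (X u - ξ)) (DY t + α * DX t) t :=
      fun t => (hdY t).add (((hdX t).sub_const ξ).const_mul α)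
    -- contact points must be endpoints
    have hend : ∀ bb1 bb2, bb1 ∈ K → bb2 ∈ K → bb1 ≠ bb2 →
        (Y bb1 + α * (X bb1 - ξ) = η) → (Y bb2 + α * (X bb2 - ξ) = η) →
        a1 < bb1 → bb1 < a2 → False := by
      intro bb1 bb2 h1K h2K hne12 hF1 hF2 hlo hhi
      have hloc : IsLocalMin (fun u => Y u + α * (X u - ξ)) bb1 := by
        have hnhds : Set.Ioo a1 a2 ∈ 𝓝 bb1 := Ioo_mem_nhds hlo hhi
        filter_upwards [hnhds] with s hs
        have := hFmin s (Set.Ioo_subset_Icc_self hs)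
        show Y bb1 + α * (X bb1 - ξ) ≤ Y s + α * (X s - ξ)
        linarith [hF1]
      have hder0 : DY bb1 + α * DX bb1 = 0 := hloc.hasDerivAt_eq_zero (hdF bb1)
      have hs := hsgn' bb1 h1K bb2 h2K (Ne.symm hne12)
      have e1 : Y bb2 - Y bb1 = -(α * (X bb2 - X bb1)) := by linarith [hF1, hF2]
      have e2 : DY bb1 = -(α * DX bb1) := by linarith [hder0]
      rw [e1, e2] at hs
      have hzero : ε * (DX bb1 * -(α * (X bb2 - X bb1)) - -(α * DX bb1) * (X bb2 - X bb1)) = 0 := by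
        ring
      linarith [hs, hzero]
    have hb1a1 : b1 = a1 := by
      by_contra hne1
      exact hend b1 b2 hb1K hb2K (ne_of_lt hb12) hFb1 hFb2
        (lt_of_le_of_ne hb1K.1 (Ne.symm hne1)) (lt_of_lt_of_le hb12 hb2K.2)
    have hb2a2 : b2 = a2 := by
      by_contra hne2
      exact hend b2 b1 hb2K hb1K (ne_of_gt hb12) hFb2 hFb1
        (lt_of_le_of_lt hb1K.1 hb12) (lt_of_le_of_ne hb2K.2 hne2)
    rw [hb1a1] at hFb1
    rw [hb2a2] at hFb2
    -- the midpoint level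
    set ξs := (X a1 + X a2)/2 with hξsdef
    have hXcont : Continuous X := by
      rw [continuous_iff_continuousAt]; exact fun t => (hdX t).continuousAt
    have hb0ex : ∃ b0 ∈ K, X b0 = ξs := by
      have hsub := intermediate_value_uIcc (a := a1) (b := a2) (hXcont.continuousOn)
      have hmem : ξs ∈ Set.uIcc (X a1) (X a2) := by
        rcases le_total (X a1) (X a2) with h' | h'
        · rw [Set.uIcc_of_le h']; constructor <;> [linarith; linarith]
        · rw [Set.uIcc_of_ge h']; constructor <;> [linarith; linarith]
      obtain ⟨b0, hb0, hXb0⟩ := hsub hmem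
      rw [Set.uIcc_of_le ha] at hb0
      exact ⟨b0, hb0, hXb0⟩
    -- the midpoint of the chord
    set ms : Fin 3 → ℝ := (1/2 : ℝ) • φ a1 + (1/2 : ℝ) • φ a2 with hmsdef
    have ha1K : a1 ∈ K := Set.left_mem_Icc.2 ha
    have ha2K : a2 ∈ K := Set.right_mem_Icc.2 ha
    have hmsΛ : ms ∈ convexHull ℝ (φ '' K) :=
      (convex_convexHull ℝ _) (hφK_sub ⟨a1, ha1K, rfl⟩) (hφK_sub ⟨a2, ha2K, rfl⟩)
        (by norm_num) (by norm_num) (by norm_num)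
    have hmsq : q ⬝ᵥ ms = ξs := by
      rw [hmsdef, dotProduct_add, dotProduct_smul, dotProduct_smul]
      have h1 : q ⬝ᵥ φ a1 = X a1 := rfl
      have h2 : q ⬝ᵥ φ a2 = X a2 := rfl
      rw [h1, h2, smul_eq_mul, smul_eq_mul, hξsdef]; ring
    have hmsc : c ⬝ᵥ ms = (Y a1 + Y a2)/2 := by
      rw [hmsdef, dotProduct_add, dotProduct_smul, dotProduct_smul]
      have h1 : c ⬝ᵥ φ a1 = Y a1 := rfl
      have h2 : c ⬝ᵥ φ a2 = Y a2 := rfl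
      rw [h1, h2, smul_eq_mul, smul_eq_mul]; ring
    have hmsne : ∀ b ∈ K, ms ≠ φ b := by
      intro b hb hcontra
      have h0 := congrFun hcontra 0
      have h1 := congrFun hcontra 1
      simp [hmsdef, hφ, Pi.add_apply, Pi.smul_apply, smul_eq_mul] at h0 h1
      nlinarith [h0, h1, ha12]
    have hYlevel : ∀ b ∈ K, X b = ξs → (Y a1 + Y a2)/2 < Y b := by
      intro b hb hXb
      have hge : (Y a1 + Y a2)/2 ≤ Y b := by
        have h1 := hFmin b hb
        rw [hXb] at h1
        have h2 : Y a1 + α * (X a1 - ξ) + (Y a2 + α * (X a2 - ξ)) = 2 * η := by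
          linarith [hFb1, hFb2]
        rw [hξsdef] at h1
        nlinarith [h1, h2]
      rcases hge.eq_or_lt with heq | h
      · exfalso
        have hlem := lem1 b hb ms hmsΛ (hmsne b hb)
        rw [hmsq, hmsc, hXb, ← heq] at hlem
        simp at hlem
      · exact h
    have hderneg : ∀ b ∈ K, X b = ξs → ε * DX b < 0 := by
      intro b hb hXb
      have hlem := lem1 b hb ms hmsΛ (hmsne b hb)
      rw [hmsq, hmsc, hXb] at hlem
      have h2 := hYlevel b hb hXb
      have h3 : 0 < (ε * DX b) * ((Y a1 + Y a2)/2 - Y b) := by nlinarith [hlem]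
      rcases mul_pos_iff.1 h3 with ⟨hp, hq⟩ | ⟨hp, _⟩
      · linarith
      · exact hp
    obtain ⟨b0, hb0K, hXb0⟩ := hb0ex
    have happ := huniq b0 hb0K ⟨?_, ?_⟩
    · -- conclusion contradicts hYlevel
      rw [hexp2 b0 c] at happ
      have h1 : c ⬝ᵥ φ a1 = Y a1 := rfl
      have h2 : c ⬝ᵥ φ a2 = Y a2 := rfl
      have h3 : c ⬝ᵥ φ b0 = Y b0 := rfl
      rw [h1, h2, h3] at happ
      linarith [hYlevel b0 hb0K hXb0]
    · rw [hexp2 b0 q]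
      have h1 : q ⬝ᵥ φ a1 = X a1 := rfl
      have h2 : q ⬝ᵥ φ a2 = X a2 := rfl
      have h3 : q ⬝ᵥ φ b0 = X b0 := rfl
      rw [h1, h2, h3, hXb0, hξsdef]; ring
    · intro b hb hbq
      rw [hexp2 b q] at hbq
      have h1 : q ⬝ᵥ φ a1 = X a1 := rfl
      have h2 : q ⬝ᵥ φ a2 = X a2 := rfl
      have h3 : q ⬝ᵥ φ b = X b := rfl
      rw [h1, h2, h3] at hbq
      have hXb : X b = ξs := by rw [hξsdef]; linarith
      exact crossing_lemma hdX hderneg b hb b0 hb0K hXb hXb0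
  -- conclude from the key claim
  obtain ⟨a, haK, hXa, hYa⟩ := key
  by_cases hma : m0 = φ a
  · exact ⟨a, haK, hma.symm⟩
  · exfalso
    have hlem := lem1 a haK m0 hm0Λ hma
    rw [hm0ξ, ← hηdef, hXa, hYa] at hlem
    simp at hlem
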